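/- Let W be a basis of F_{q^n} over F_q with dual basis B, let S_{W,j} = { y ∈ F_{q^n}^* : Tr(β_j y) ≠ 0, Tr(β_i y) = 0 for i > j }, and let T_{W,i} be the projective polynomials defined from the cofactors of the Moore matrix of W, with Z_{W,j} = { x ∈ μ_{(q^n-1)/(q-1)} : T_{W,j}(x) ≠ 0, T_{W,i}(x) = 0 for i > j }. Then Z_{W,j} = { y^{q-1} : y ∈ S_{W,j} } for each 0 ≤ j ≤ n-1, and μ_{(q^n-1)/(q-1)} is the disjoint union of Z_{W,0}, …, Z_{W,n-1}. -/

import Mathlib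

open Matrix Polynomial

set_option linter.unusedSectionVars false

/-- The Moore matrix of `s`, with `(i,j)` entry `s i ^ q ^ j`, `q = |K|`. -/
def mooreMatrix (K : Type*) [Field K] [Fintype K] {L : Type*} [Field L] {m : ℕ}
    (s : Fin m → L) : Matrix (Fin m) (Fin m) L :=
  Matrix.of fun i j => s i ^ Fintype.card K ^ (j : ℕ)

section Helpers

variable {K L : Type*} [Field K] [Fintype K] [Field L] [Algebra K L] {n : ℕ}

@[simp] lemma mooreMatrix_apply {m : ℕ} (s : Fin m → L) (i j : Fin m) :
    mooreMatrix K s i j = s i ^ Fintype.card K ^ (j : ℕ) := rfl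

lemma exists_frobQ (K L : Type*) [Field K] [Fintype K] [Field L] [Algebra K L] :
    ∃ φ : L →+* L, ∀ x : L, φ x = x ^ Fintype.card K := by
  have hK : CharP K (ringChar K) := ringChar.charP K
  obtain ⟨s, hp, hcard⟩ := FiniteField.card K (ringChar K)
  haveI : Fact (Nat.Prime (ringChar K)) := ⟨hp⟩
  haveI : CharP L (ringChar K) :=
    charP_of_injective_algebraMap (algebraMap K L).injective (ringChar K)
  exact ⟨iterateFrobenius L (ringChar K) s, fun x => by
    rw [iterateFrobenius_def, ← hcard]⟩

lemma frobQ_algebraMap (a : K) :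
    (algebraMap K L a) ^ Fintype.card K = algebraMap K L a := by
  rw [← map_pow, FiniteField.pow_card]

lemma frobQ_neg_one_pow (e : ℕ) :
    ((-1 : L) ^ e) ^ Fintype.card K = (-1 : L) ^ e := by
  obtain ⟨φ, hφ⟩ := exists_frobQ K L
  rw [← hφ, map_pow, map_neg, _root_.map_one]

lemma frobQ_smul (a : K) (z : L) :
    (a • z) ^ Fintype.card K = a • z ^ Fintype.card K := by
  rw [Algebra.smul_def, Algebra.smul_def, mul_pow, frobQ_algebraMap]

lemma pow_q_repr (b : Module.Basis (Fin (n + 1)) K L) (x : L) (k : ℕ) :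
    x ^ Fintype.card K ^ k = ∑ i, b.repr x i • (b i) ^ Fintype.card K ^ k := by
  induction k with
  | zero => simpa using (b.sum_repr x).symm
  | succ k ih =>
    obtain ⟨φ, hφ⟩ := exists_frobQ K L
    have h1 : x ^ Fintype.card K ^ (k + 1) = (x ^ Fintype.card K ^ k) ^ Fintype.card K := by
      rw [← pow_mul, pow_succ]
    rw [h1, ih, ← hφ, map_sum]
    refine Finset.sum_congr rfl fun i _ => ?_
    rw [hφ, frobQ_smul, ← pow_mul, ← pow_succ]

end Helpers

section Moore

variable {K L : Type*} [Field K] [Fintype K] [Field L] [Fintype L] [Algebra K L] {n : ℕ}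

lemma cardL (b : Module.Basis (Fin (n + 1)) K L) :
    Fintype.card L = Fintype.card K ^ (n + 1) := by
  rw [Module.card_fintype b, Fintype.card_fin]

lemma pow_q_card (hL : Fintype.card L = Fintype.card K ^ (n + 1)) (x : L) :
    x ^ Fintype.card K ^ (n + 1) = x := by
  rw [← hL]; exact FiniteField.pow_card x

lemma moore_det_ne_zero (b : Module.Basis (Fin (n + 1)) K L) :
    (mooreMatrix K (⇑b)).det ≠ 0 := by
  intro h
  obtain ⟨v, hv0, hmv⟩ := Matrix.exists_mulVec_eq_zero_iff.2 h
  have h1lt : 1 < Fintype.card K := Fintype.one_lt_card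
  set q := Fintype.card K with hq
  set P : Polynomial L := ∑ j : Fin (n + 1), Polynomial.C (v j) * Polynomial.X ^ (q ^ (j : ℕ))
    with hP
  have hevalb : ∀ i : Fin (n + 1), ∑ j : Fin (n + 1), v j * (b i) ^ q ^ (j : ℕ) = 0 := by
    intro i
    have := congrFun hmv i
    simpa [Matrix.mulVec, dotProduct, mul_comm] using this
  have heval : ∀ x : L, P.eval x = 0 := by
    intro x
    have hPx : P.eval x = ∑ j : Fin (n + 1), v j * x ^ q ^ (j : ℕ) := by
      simp [hP, Polynomial.eval_finset_sum]
    rw [hPx]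
    calc ∑ j : Fin (n + 1), v j * x ^ q ^ (j : ℕ)
        = ∑ j : Fin (n + 1), ∑ i : Fin (n + 1), b.repr x i • (v j * (b i) ^ q ^ (j : ℕ)) := by
          refine Finset.sum_congr rfl fun j _ => ?_
          rw [pow_q_repr b x, Finset.mul_sum]
          exact Finset.sum_congr rfl fun i _ => mul_smul_comm _ _ _
      _ = ∑ i : Fin (n + 1), b.repr x i • ∑ j : Fin (n + 1), v j * (b i) ^ q ^ (j : ℕ) := by
          rw [Finset.sum_comm]
          exact Finset.sum_congr rfl fun i _ => (Finset.smul_sum).symm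
      _ = 0 := by simp [hevalb]
  have hPne : P ≠ 0 := by
    intro hP0
    obtain ⟨j0, hj0⟩ := Function.ne_iff.1 hv0
    have hc := congrArg (fun p : Polynomial L => p.coeff (q ^ (j0 : ℕ))) hP0
    simp only [hP, Polynomial.finset_sum_coeff, Polynomial.coeff_C_mul,
      Polynomial.coeff_X_pow, Polynomial.coeff_zero, mul_ite, mul_one, mul_zero] at hc
    have hc2 : (∑ x : Fin (n + 1), if j0 = x then v x else 0) = 0 := by
      rw [← hc]
      refine Finset.sum_congr rfl fun x _ => ?_
      congr 1
      simp only [eq_iff_iff]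
      constructor
      · rintro rfl; rfl
      · intro h; exact Fin.ext (Nat.pow_right_injective h1lt h)
    rw [Finset.sum_ite_eq] at hc2
    simp only [Finset.mem_univ, if_true] at hc2
    simp only [Pi.zero_apply] at hj0
    exact hj0 hc2
  have hdeg : P.natDegree < Fintype.card L := by
    have h1 : P.natDegree ≤ q ^ n := by
      refine Polynomial.natDegree_sum_le_of_forall_le _ _ fun j _ => ?_
      refine (Polynomial.natDegree_C_mul_le _ _).trans ?_
      rw [Polynomial.natDegree_X_pow]
      exact Nat.pow_le_pow_right (by omega) (Nat.lt_succ_iff.1 j.isLt)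
    have h2 : q ^ n < q ^ (n + 1) := Nat.pow_lt_pow_right h1lt (Nat.lt_succ_self n)
    rw [cardL b, ← hq]; omega
  exact hPne (Polynomial.eq_zero_of_natDegree_lt_card_of_eval_eq_zero P
    Function.injective_id heval (by simpa using hdeg))

end Moore

section Rotate

lemma succAbove_rotate {m : ℕ} (j : ℕ) (hj : j < m + 1) (b : Fin (m + 1)) :
    ((((⟨j + 1, by omega⟩ : Fin (m + 2))).succAbove (finRotate (m + 1) b) : ℕ)
        = (((⟨j, by omega⟩ : Fin (m + 2)).succAbove b : ℕ) + 1) ∧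
      ((⟨j, by omega⟩ : Fin (m + 2)).succAbove b : ℕ) + 1 < m + 2) ∨
    (((⟨j + 1, by omega⟩ : Fin (m + 2)).succAbove (finRotate (m + 1) b) : ℕ) = 0 ∧
      ((⟨j, by omega⟩ : Fin (m + 2)).succAbove b : ℕ) = m + 1) := by
  by_cases hb : (b : ℕ) = m
  · right
    have hbl : b = Fin.last m := Fin.ext hb
    subst hbl
    rw [finRotate_succ_apply, Fin.last_add_one]
    have h1 : Fin.castSucc (0 : Fin (m + 1)) < (⟨j + 1, by omega⟩ : Fin (m + 2)) := by
      rw [Fin.lt_def]; simp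
    have h2 : (⟨j, by omega⟩ : Fin (m + 2)) ≤ Fin.castSucc (Fin.last m) := by
      rw [Fin.le_def]; simpa using by omega
    rw [Fin.succAbove_of_castSucc_lt _ _ h1, Fin.succAbove_of_le_castSucc _ _ h2]
    simp
  · left
    have hb' : (b : ℕ) < m := lt_of_le_of_ne (Nat.lt_succ_iff.1 b.isLt) hb
    have hrot : ((finRotate (m + 1) b : Fin (m + 1)) : ℕ) = (b : ℕ) + 1 := by
      rw [finRotate_succ_apply, Fin.val_add, Fin.val_one',
        Nat.mod_eq_of_lt (show 1 < m + 1 by omega), Nat.mod_eq_of_lt (by omega)]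
    by_cases hbj : (b : ℕ) < j
    · have h1 : Fin.castSucc (finRotate (m + 1) b) < (⟨j + 1, by omega⟩ : Fin (m + 2)) := by
        rw [Fin.lt_def]; simp only [Fin.coe_castSucc, hrot]; omega
      have h2 : Fin.castSucc b < (⟨j, by omega⟩ : Fin (m + 2)) := by
        rw [Fin.lt_def]; simpa using hbj
      rw [Fin.succAbove_of_castSucc_lt _ _ h1, Fin.succAbove_of_castSucc_lt _ _ h2]
      constructor <;> simp only [Fin.val_succ, Fin.coe_castSucc, hrot] <;> omega
    · have h1 : (⟨j + 1, by omega⟩ : Fin (m + 2)) ≤ Fin.castSucc (finRotate (m + 1) b) := by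
        rw [Fin.le_def]; simp only [Fin.coe_castSucc, hrot]; omega
      have h2 : (⟨j, by omega⟩ : Fin (m + 2)) ≤ Fin.castSucc b := by
        rw [Fin.le_def]; simpa using by omega
      rw [Fin.succAbove_of_le_castSucc _ _ h1, Fin.succAbove_of_le_castSucc _ _ h2]
      constructor <;> simp only [Fin.val_succ, Fin.coe_castSucc, hrot] <;> omega

end Rotate

section Minor

variable {K L : Type*} [Field K] [Fintype K] [Field L] [Fintype L] [Algebra K L] {n : ℕ}

lemma neg_one_pow_congr' {a b : ℕ} (h : a % 2 = b % 2) : (-1 : L) ^ a = (-1 : L) ^ b := by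
  rw [neg_one_pow_eq_pow_mod_two, h, ← neg_one_pow_eq_pow_mod_two]

lemma moore_minor_pow (hL : Fintype.card L = Fintype.card K ^ (n + 1))
    (ω : Fin (n + 1) → L) (i : Fin (n + 1)) (j : ℕ) (hj : j < n + 1) :
    ((mooreMatrix K ω).submatrix i.succAbove (Fin.succAbove ⟨j, hj⟩)).det
      = (-1 : L) ^ (j * (n + 1)) *
        ((mooreMatrix K ω).submatrix i.succAbove (Fin.succAbove 0)).det ^
          Fintype.card K ^ j := by
  induction j with
  | zero => simp
  | succ j ih =>
    have hj' : j < n + 1 := by omega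
    obtain ⟨m, rfl⟩ : ∃ m, n = m + 1 := ⟨n - 1, by omega⟩
    obtain ⟨φ, hφ⟩ := exists_frobQ K L
    set q := Fintype.card K with hq
    set M := mooreMatrix K ω with hM
    -- the key matrix identity
    have key : (M.submatrix i.succAbove (Fin.succAbove ⟨j, hj'⟩)).map φ
        = (M.submatrix i.succAbove (Fin.succAbove ⟨j + 1, hj⟩)).submatrix id
            (finRotate (m + 1)) := by
      ext a b
      simp only [Matrix.map_apply, Matrix.submatrix_apply, id_eq, hM, mooreMatrix_apply]
      rw [hφ, ← pow_mul]
      rcases succAbove_rotate j (by omega) b with ⟨h1, h2⟩ | ⟨h1, h2⟩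
      · rw [h1, ← pow_succ]
      · rw [h1, h2, pow_zero, pow_one, ← pow_succ]
        exact pow_q_card hL _
    have hdetmap : φ ((M.submatrix i.succAbove (Fin.succAbove ⟨j, hj'⟩)).det)
        = (M.submatrix i.succAbove (Fin.succAbove ⟨j, hj'⟩)).det ^ q := by
      rw [hφ]
    have step : (M.submatrix i.succAbove (Fin.succAbove ⟨j, hj'⟩)).det ^ q
        = (-1 : L) ^ m * (M.submatrix i.succAbove (Fin.succAbove ⟨j + 1, hj⟩)).det := by
      rw [← hdetmap, RingHom.map_det, RingHom.mapMatrix_apply, key, Matrix.det_permute']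
      congr 1
      rw [sign_finRotate]
      push_cast
      simp
    have step' : (M.submatrix i.succAbove (Fin.succAbove ⟨j + 1, hj⟩)).det
        = (-1 : L) ^ m * (M.submatrix i.succAbove (Fin.succAbove ⟨j, hj'⟩)).det ^ q := by
      rw [step, ← mul_assoc, ← pow_add]
      rw [show (-1 : L) ^ (m + m) = 1 from neg_one_pow_congr' (by omega) |>.trans (pow_zero _),
        one_mul]
    rw [step', ih hj', mul_pow, frobQ_neg_one_pow, ← pow_mul, ← pow_succ, ← mul_assoc,
      ← pow_add]
    congr 1
    apply neg_one_pow_congr'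
    rw [Nat.succ_mul]
    generalize j * (m + 1 + 1) = t
    omega

end Minor

/-- The `(i,0)`-cofactor of the Moore matrix of `s`. -/
def mooreCof (K : Type*) [Field K] [Fintype K] {L : Type*} [Field L] {n : ℕ}
    (s : Fin (n + 1) → L) (i : Fin (n + 1)) : L :=
  (-1 : L) ^ (i : ℕ) *
    ((mooreMatrix K s).submatrix i.succAbove (Fin.succAbove 0)).det

/-- The projective polynomial `T_{W,i}(x) = ∑ₖ (-1)^{k(n-1)} cᵢ^{qᵏ} x^{(qᵏ-1)/(q-1)}`,
where here the basis has `n + 1` elements (so the paper's `n - 1` is `n`). -/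
def Tproj (K : Type*) [Field K] [Fintype K] {L : Type*} [Field L] {n : ℕ}
    (s : Fin (n + 1) → L) (i : Fin (n + 1)) (x : L) : L :=
  ∑ k : Fin (n + 1), (-1 : L) ^ ((k : ℕ) * n) * mooreCof K s i ^ Fintype.card K ^ (k : ℕ) *
    x ^ ((Fintype.card K ^ (k : ℕ) - 1) / (Fintype.card K - 1))

section Laplace

variable {K L : Type*} [Field K] [Fintype K] [Field L] [Fintype L] [Algebra K L] {n : ℕ}

lemma det_updateRow_moore (hL : Fintype.card L = Fintype.card K ^ (n + 1))
    (ω : Fin (n + 1) → L) (i : Fin (n + 1)) (y : L) :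
    ((mooreMatrix K ω).updateRow i (fun j => y ^ Fintype.card K ^ (j : ℕ))).det
      = ∑ k : Fin (n + 1), (-1 : L) ^ ((k : ℕ) * n) *
          mooreCof K ω i ^ Fintype.card K ^ (k : ℕ) * y ^ Fintype.card K ^ (k : ℕ) := by
  set q := Fintype.card K with hq
  set M := mooreMatrix K ω with hM
  rw [Matrix.det_succ_row _ i]
  refine Finset.sum_congr rfl fun j _ => ?_
  have hrow : (M.updateRow i fun j => y ^ q ^ (j : ℕ)) i j = y ^ q ^ (j : ℕ) := by
    rw [Matrix.updateRow_self]
  have hsub : (M.updateRow i fun j => y ^ q ^ (j : ℕ)).submatrix i.succAbove j.succAbove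
      = M.submatrix i.succAbove j.succAbove := by
    ext a b
    simp only [Matrix.submatrix_apply]
    rw [Matrix.updateRow_ne (Fin.succAbove_ne i a)]
  rw [hrow, hsub]
  have hjeta : (⟨(j : ℕ), j.isLt⟩ : Fin (n + 1)) = j := Fin.eta j j.isLt
  have hminor := moore_minor_pow hL ω i (j : ℕ) j.isLt
  rw [hjeta] at hminor
  rw [hminor]
  have hcof : mooreCof K ω i ^ q ^ (j : ℕ)
      = (-1 : L) ^ (i : ℕ) *
        ((M.submatrix i.succAbove (Fin.succAbove 0)).det) ^ q ^ (j : ℕ) := by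
    rw [mooreCof, mul_pow]
    congr 1
    -- ((-1)^i)^(q^j) = (-1)^i
    induction (j : ℕ) with
    | zero => rw [pow_zero, pow_one]
    | succ k ihk => rw [pow_succ, pow_mul, ihk, frobQ_neg_one_pow (K := K)]
  rw [hcof]
  have hsign : (-1 : L) ^ ((i : ℕ) + (j : ℕ)) * (-1 : L) ^ ((j : ℕ) * (n + 1))
      = (-1 : L) ^ ((j : ℕ) * n) * (-1 : L) ^ (i : ℕ) := by
    rw [← pow_add, ← pow_add]
    apply neg_one_pow_congr'
    rw [Nat.mul_succ]
    generalize (j : ℕ) * n = t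
    omega
  calc (-1 : L) ^ ((i : ℕ) + (j : ℕ)) * y ^ q ^ (j : ℕ) *
        ((-1 : L) ^ ((j : ℕ) * (n + 1)) *
          (M.submatrix i.succAbove (Fin.succAbove 0)).det ^ q ^ (j : ℕ))
      = ((-1 : L) ^ ((i : ℕ) + (j : ℕ)) * (-1 : L) ^ ((j : ℕ) * (n + 1))) *
          (M.submatrix i.succAbove (Fin.succAbove 0)).det ^ q ^ (j : ℕ) *
          y ^ q ^ (j : ℕ) := by ring
    _ = _ := by rw [hsign]; ring

end Laplace

section Main

variable {K L : Type*} [Field K] [Fintype K] [Field L] [Fintype L] [Algebra K L] {n : ℕ}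

lemma det_updateRow_moore_eq (b : Module.Basis (Fin (n + 1)) K L) (i : Fin (n + 1)) (y : L) :
    ((mooreMatrix K (⇑b)).updateRow i (fun j => y ^ Fintype.card K ^ (j : ℕ))).det
      = algebraMap K L (b.repr y i) * (mooreMatrix K (⇑b)).det := by
  have hrow : (fun j : Fin (n + 1) => y ^ Fintype.card K ^ (j : ℕ))
      = ∑ m : Fin (n + 1), algebraMap K L (b.repr y m) • (mooreMatrix K (⇑b)) m := by
    funext j
    rw [Finset.sum_apply, pow_q_repr b y (j : ℕ)]
    refine Finset.sum_congr rfl fun m _ => ?_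
    rw [Pi.smul_apply, Algebra.smul_def, Algebra.smul_def]
    rfl
  rw [hrow, Matrix.det_updateRow_sum, smul_eq_mul]

lemma trace_eq_repr (b : Module.Basis (Fin (n + 1)) K L) (β : Fin (n + 1) → L)
    (hdual : ∀ i j, Algebra.trace K L (β i * b j) = if i = j then 1 else 0)
    (i : Fin (n + 1)) (y : L) :
    Algebra.trace K L (β i * y) = b.repr y i := by
  conv_lhs => rw [← b.sum_repr y]
  rw [Finset.mul_sum, map_sum]
  have : ∀ m : Fin (n + 1),
      Algebra.trace K L (β i * b.repr y m • b m)
        = b.repr y m * (if i = m then 1 else 0) := by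
    intro m
    rw [mul_smul_comm, _root_.map_smul, hdual, smul_eq_mul]
  rw [Finset.sum_congr rfl fun m _ => this m]
  simp

lemma Tproj_mul_eq (hL : Fintype.card L = Fintype.card K ^ (n + 1))
    (ω : Fin (n + 1) → L) (i : Fin (n + 1)) (y : L) :
    Tproj K ω i (y ^ (Fintype.card K - 1)) * y
      = ((mooreMatrix K ω).updateRow i (fun j => y ^ Fintype.card K ^ (j : ℕ))).det := by
  rw [det_updateRow_moore hL, Tproj, Finset.sum_mul]
  refine Finset.sum_congr rfl fun k _ => ?_
  have h1 : 1 < Fintype.card K := Fintype.one_lt_card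
  have hdvd : Fintype.card K - 1 ∣ Fintype.card K ^ (k : ℕ) - 1 := by
    simpa using Nat.sub_dvd_pow_sub_pow (Fintype.card K) 1 (k : ℕ)
  have hpos : 1 ≤ Fintype.card K ^ (k : ℕ) := Nat.one_le_pow _ _ (by omega)
  have hy : (y ^ (Fintype.card K - 1)) ^
        ((Fintype.card K ^ (k : ℕ) - 1) / (Fintype.card K - 1)) * y
      = y ^ Fintype.card K ^ (k : ℕ) := by
    rw [← pow_mul, Nat.mul_div_cancel' hdvd, ← pow_succ]
    congr 1
    omega
  rw [mul_assoc, hy]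

lemma exists_pow_q_sub_one (hL : Fintype.card L = Fintype.card K ^ (n + 1)) (x : L)
    (hx0 : x ≠ 0)
    (hx : x ^ ((Fintype.card K ^ (n + 1) - 1) / (Fintype.card K - 1)) = 1) :
    ∃ y : L, y ≠ 0 ∧ y ^ (Fintype.card K - 1) = x := by
  classical
  set q := Fintype.card K with hq
  set ℓ := (q ^ (n + 1) - 1) / (q - 1) with hℓ
  have h1 : 1 < q := Fintype.one_lt_card
  have hdvd : q - 1 ∣ q ^ (n + 1) - 1 := by
    simpa using Nat.sub_dvd_pow_sub_pow q 1 (n + 1)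
  have hmul : (q - 1) * ℓ = q ^ (n + 1) - 1 := Nat.mul_div_cancel' hdvd
  have hqn : q ≤ q ^ (n + 1) := Nat.le_self_pow (by omega) q
  have hℓpos : 0 < ℓ := Nat.div_pos (by omega) (by omega)
  obtain ⟨g, hg⟩ := IsCyclic.exists_generator (α := Lˣ)
  have hcard : Fintype.card Lˣ = q ^ (n + 1) - 1 := by
    rw [Fintype.card_units, hL]
  have horder : orderOf g = q ^ (n + 1) - 1 := by
    rw [orderOf_eq_card_of_forall_mem_zpowers hg, Nat.card_eq_fintype_card, hcard]
  set u : Lˣ := Units.mk0 x hx0 with hu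
  obtain ⟨t, ht⟩ : u ∈ Submonoid.powers g := by
    rw [mem_powers_iff_mem_zpowers]; exact hg u
  have huℓ : u ^ ℓ = 1 := by
    ext
    push_cast [hu]
    exact hx
  have hdvd2 : orderOf g ∣ t * ℓ := by
    apply orderOf_dvd_of_pow_eq_one
    rw [pow_mul, show g ^ t = u from ht, huℓ]
  rw [horder, ← hmul] at hdvd2
  obtain ⟨d, hd⟩ := hdvd2
  have htd : t = (q - 1) * d := by
    have : t * ℓ = ((q - 1) * d) * ℓ := by
      rw [hd]; ring
    exact Nat.eq_of_mul_eq_mul_right hℓpos this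
  refine ⟨((g ^ d : Lˣ) : L), Units.ne_zero _, ?_⟩
  have : (g ^ d) ^ (q - 1) = u := by
    rw [← pow_mul, mul_comm, ← htd, show g ^ t = u from ht]
  calc ((g ^ d : Lˣ) : L) ^ (q - 1) = (((g ^ d) ^ (q - 1) : Lˣ) : L) := by push_cast; rfl
    _ = x := by rw [this]; rfl

end Main

/-- `S_{W,j} = { y ∈ L* : Tr(βⱼ y) ≠ 0 and Tr(βᵢ y) = 0 for all i > j }`. -/
def traceFlagPiece (K : Type*) [Field K] {L : Type*} [Field L] [Algebra K L] {n : ℕ}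
    (β : Fin n → L) (j : Fin n) : Set L :=
  {y | y ≠ 0 ∧ Algebra.trace K L (β j * y) ≠ 0 ∧
    ∀ i : Fin n, j < i → Algebra.trace K L (β i * y) = 0}

/-- `Z_{W,j} = { x ∈ μ : T_{W,j}(x) ≠ 0 and T_{W,i}(x) = 0 for all i > j }`. -/
def muFlagPiece (K : Type*) [Field K] [Fintype K] {L : Type*} [Field L] {n : ℕ}
    (ω : Fin (n + 1) → L) (j : Fin (n + 1)) : Set L :=
  {x | (x ≠ 0 ∧ x ^ ((Fintype.card K ^ (n + 1) - 1) / (Fintype.card K - 1)) = 1) ∧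
    Tproj K ω j x ≠ 0 ∧ ∀ i : Fin (n + 1), j < i → Tproj K ω i x = 0}

theorem stmt15 (K L : Type*) [Field K] [Fintype K] [Field L] [Fintype L] [Algebra K L]
    (n : ℕ) (ω β : Fin (n + 1) → L)
    (hω : ∃ b : Module.Basis (Fin (n + 1)) K L, ∀ i, b i = ω i)
    (hβ : ∃ b : Module.Basis (Fin (n + 1)) K L, ∀ i, b i = β i)
    (hdual : ∀ i j, Algebra.trace K L (β i * ω j) = if i = j then 1 else 0) :
    (∀ j : Fin (n + 1),
      muFlagPiece K ω j = (fun y : L => y ^ (Fintype.card K - 1)) '' traceFlagPiece K β j) ∧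
    (⋃ j : Fin (n + 1), muFlagPiece K ω j) =
      {x : L | x ≠ 0 ∧ x ^ ((Fintype.card K ^ (n + 1) - 1) / (Fintype.card K - 1)) = 1} ∧
    Pairwise (Function.onFun Disjoint (muFlagPiece K ω)) := by
  classical
  obtain ⟨bω, hbω⟩ := hω
  obtain ⟨bβ, hbβ⟩ := hβ
  have hωe : ω = ⇑bω := funext fun i => (hbω i).symm
  have hβe : β = ⇑bβ := funext fun i => (hbβ i).symm
  subst hωe hβe
  have hL : Fintype.card L = Fintype.card K ^ (n + 1) := cardL bω
  have hdet : (mooreMatrix K (⇑bω)).det ≠ 0 := moore_det_ne_zero bω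
  have hdvd : Fintype.card K - 1 ∣ Fintype.card K ^ (n + 1) - 1 := by
    simpa using Nat.sub_dvd_pow_sub_pow (Fintype.card K) 1 (n + 1)
  have key : ∀ (i : Fin (n + 1)) (y : L), y ≠ 0 →
      (Tproj K (⇑bω) i (y ^ (Fintype.card K - 1)) = 0 ↔
        Algebra.trace K L (bβ i * y) = 0) := by
    intro i y hy0
    have h1 : Tproj K (⇑bω) i (y ^ (Fintype.card K - 1)) * y
        = algebraMap K L (bω.repr y i) * (mooreMatrix K (⇑bω)).det := by
      rw [Tproj_mul_eq hL, det_updateRow_moore_eq]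
    rw [trace_eq_repr bω (⇑bβ) hdual]
    constructor
    · intro h
      rw [h, zero_mul] at h1
      rcases mul_eq_zero.1 h1.symm with h' | h'
      · exact (map_eq_zero_iff _ (algebraMap K L).injective).1 h'
      · exact absurd h' hdet
    · intro h
      rw [h, map_zero, zero_mul] at h1
      rcases mul_eq_zero.1 h1 with h' | h'
      · exact h'
      · exact absurd h' hy0
  have part1 : ∀ j : Fin (n + 1), muFlagPiece K (⇑bω) j
      = (fun y : L => y ^ (Fintype.card K - 1)) '' traceFlagPiece K (⇑bβ) j := by
    intro j
    ext x
    constructor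
    · rintro ⟨⟨hx0, hxμ⟩, hTj, hTgt⟩
      obtain ⟨y, hy0, hyx⟩ := exists_pow_q_sub_one hL x hx0 hxμ
      refine ⟨y, ⟨hy0, ?_, fun i hi => ?_⟩, hyx⟩
      · intro htr
        rw [← hyx] at hTj
        exact hTj ((key j y hy0).2 htr)
      · refine (key i y hy0).1 ?_
        rw [hyx]
        exact hTgt i hi
    · rintro ⟨y, ⟨hy0, htr, hgt⟩, rfl⟩
      have hxμ : (y ^ (Fintype.card K - 1)) ^
          ((Fintype.card K ^ (n + 1) - 1) / (Fintype.card K - 1)) = 1 := by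
        rw [← pow_mul, Nat.mul_div_cancel' hdvd, ← hL]
        exact FiniteField.pow_card_sub_one_eq_one y hy0
      refine ⟨⟨pow_ne_zero _ hy0, hxμ⟩, ?_, fun i hi => (key i y hy0).2 (hgt i hi)⟩
      intro h
      exact htr ((key j y hy0).1 h)
  refine ⟨part1, ?_, ?_⟩
  · ext x
    constructor
    · intro hx
      obtain ⟨j, hj⟩ := Set.mem_iUnion.1 hx
      exact hj.1
    · intro hx
      obtain ⟨hx0, hxμ⟩ := hx
      obtain ⟨y, hy0, hyx⟩ := exists_pow_q_sub_one hL x hx0 hxμ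
      set s : Finset (Fin (n + 1)) :=
        Finset.univ.filter fun i => Algebra.trace K L (bβ i * y) ≠ 0 with hs
      have hsne : s.Nonempty := by
        by_contra hemp
        have hall : ∀ i, bω.repr y i = 0 := by
          intro i
          have htr0 : Algebra.trace K L (bβ i * y) = 0 := by
            by_contra hne
            exact Finset.eq_empty_iff_forall_notMem.1
              (Finset.not_nonempty_iff_eq_empty.1 hemp) i
              (Finset.mem_filter.2 ⟨Finset.mem_univ i, hne⟩)
          rwa [trace_eq_repr bω (⇑bβ) hdual] at htr0
        have hy : y = 0 := by
          apply bω.repr.injective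
          rw [map_zero]
          exact Finsupp.ext hall
        exact hy0 hy
      set j := s.max' hsne with hj
      have hjmem : j ∈ s := s.max'_mem hsne
      refine Set.mem_iUnion.2 ⟨j, ?_⟩
      rw [part1 j]
      refine ⟨y, ⟨hy0, (Finset.mem_filter.1 hjmem).2, fun i hij => ?_⟩, hyx⟩
      by_contra hne
      have : i ∈ s := Finset.mem_filter.2 ⟨Finset.mem_univ i, hne⟩
      exact absurd (Finset.le_max' s i this) (not_le.2 hij)
  · intro i j hij
    simp only [Function.onFun]
    rw [Set.disjoint_left]
    rintro x ⟨_, hTi, hgti⟩ ⟨_, hTj, hgtj⟩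
    rcases lt_or_gt_of_ne hij with h | h
    · exact hTj (hgti j h)
    · exact hTi (hgtj i h)
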